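/- Let n be an even positive integer, k a positive integer, and let G be a k-edge-colored graph with color classes G₁, …, G_k containing no monochromatic connected matching of size n/2. Suppose that for every color i and every connected component C of G_i a partition V(C) = S ∪ Q ∪ I is given satisfying: (1) |Q| + 2|S| = min{v(C), n − 1}; (2) I is an independent set in G_i, and if v(C) ≤ n − 1 then I = ∅; (3) every vertex in Q has at most one neighbor in I within G_i; (4) every vertex in I has degree in G_i less than n/2. Call a vertex v strong if it lies in the S-part for some color, Q-saturated if it lies in the Q-part for every color, and small otherwise (i.e., it lies in the I-part for some color and never in an S-part). Define F(v) = (n−1)/4 if v is strong, F(v) = k·(n−1)/2 − deg_G(v)/2 if v is Q-saturated, and F(v) = 0 if v is small. Then Σ_{v ∈ V(G)} F(v) ≤ k·((n−1)/2)·v(G) − e(G). -/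

import Mathlib

/-- A connected matching of size `m` in `G`: a set of `m` pairwise disjoint edges of `G`,
all lying in the same connected component of `G`. -/
def HasConnectedMatching {V : Type*} (G : SimpleGraph V) (m : ℕ) : Prop :=
  ∃ M : Finset (Sym2 V), M.card = m ∧ (∀ e ∈ M, e ∈ G.edgeSet) ∧
    (∀ e ∈ M, ∀ f ∈ M, e ≠ f → ∀ v : V, v ∈ e → v ∉ f) ∧
    ∃ c : G.ConnectedComponent, ∀ e ∈ M, ∀ v ∈ e, G.connectedComponentMk v = c

/-- The spanning subgraph of `G` consisting of the edges of color `i`. -/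
def colorClass {V : Type*} {k : ℕ} (G : SimpleGraph V) (col : Sym2 V → Fin k) (i : Fin k) :
    SimpleGraph V where
  Adj u v := G.Adj u v ∧ col s(u, v) = i
  symm := ⟨fun u v h => ⟨h.1.symm, by rw [Sym2.eq_swap]; exact h.2⟩⟩
  loopless := ⟨fun v h => G.loopless.irrefl v h.1⟩


open Finset in
private lemma core_comp {V : Type*} [Fintype V] (H : SimpleGraph V) (n : ℕ) (hn0 : 0 < n)
    (c : H.ConnectedComponent) (S Q I : Set V)
    (hpart : S ∪ Q ∪ I = c.supp)
    (hSQ : Disjoint S Q) (hSI : Disjoint S I) (hQI : Disjoint Q I)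
    (h1 : Q.ncard + 2 * S.ncard = min c.supp.ncard (n - 1))
    (h2 : ∀ u ∈ I, ∀ v ∈ I, ¬ H.Adj u v)
    (h2' : c.supp.ncard ≤ n - 1 → I = ∅)
    (h3 : ∀ q ∈ Q, ∀ v₁ ∈ I, ∀ v₂ ∈ I, H.Adj q v₁ → H.Adj q v₂ → v₁ = v₂)
    (φ : V → ℝ)
    (hφS : ∀ s ∈ S, φ s ≤ ((n:ℝ) - 1) / 4)
    (hφQ : ∀ q ∈ Q, φ q = 0 ∨ φ q = ((n:ℝ) - 1)/2 - ((H.neighborSet q).ncard : ℝ)/2)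
    (hφI : ∀ u ∈ I, φ u = 0) :
    ∑ v ∈ (Set.toFinite c.supp).toFinset, (φ v + ((H.neighborSet v).ncard : ℝ)/2)
      ≤ ((n:ℝ) - 1)/2 * (c.supp.ncard : ℝ) := by
  classical
  set Sf := (Set.toFinite S).toFinset with hSfdef
  set Qf := (Set.toFinite Q).toFinset with hQfdef
  set If := (Set.toFinite I).toFinset with hIfdef
  set suppF := (Set.toFinite c.supp).toFinset with hsuppFdef
  have memS : ∀ v, v ∈ Sf ↔ v ∈ S := fun v => Set.Finite.mem_toFinset _
  have memQ : ∀ v, v ∈ Qf ↔ v ∈ Q := fun v => Set.Finite.mem_toFinset _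
  have memI : ∀ v, v ∈ If ↔ v ∈ I := fun v => Set.Finite.mem_toFinset _
  have memsupp : ∀ v, v ∈ suppF ↔ v ∈ c.supp := fun v => Set.Finite.mem_toFinset _
  have hsuppF : suppF = (Sf ∪ Qf) ∪ If := by
    ext v
    simp only [memsupp, Finset.mem_union, memS, memQ, memI, ← hpart, Set.mem_union]
  have hdSQ : Disjoint Sf Qf := by
    rw [Finset.disjoint_left]
    exact fun a ha hb => Set.disjoint_left.mp hSQ ((memS a).mp ha) ((memQ a).mp hb)
  have hdSI : Disjoint Sf If := by
    rw [Finset.disjoint_left]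
    exact fun a ha hb => Set.disjoint_left.mp hSI ((memS a).mp ha) ((memI a).mp hb)
  have hdQI : Disjoint Qf If := by
    rw [Finset.disjoint_left]
    exact fun a ha hb => Set.disjoint_left.mp hQI ((memQ a).mp ha) ((memI a).mp hb)
  have hdU : Disjoint (Sf ∪ Qf) If := Finset.disjoint_union_left.mpr ⟨hdSI, hdQI⟩
  set Nf : V → Finset V := fun v => (Set.toFinite (H.neighborSet v)).toFinset with hNfdef
  have memN : ∀ v u, u ∈ Nf v ↔ H.Adj v u := by
    intro v u
    rw [Set.Finite.mem_toFinset]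
    rfl
  have hdval : ∀ v, ((H.neighborSet v).ncard : ℝ) = ((Nf v).card : ℝ) := by
    intro v
    rw [Set.ncard_eq_toFinset_card _ (Set.toFinite _)]
  -- cardinalities
  set a := Sf.card with hadef
  set qs := Qf.card with hqdef
  set m := If.card with hmdef
  have hSn : S.ncard = a := Set.ncard_eq_toFinset_card _ _
  have hQn : Q.ncard = qs := Set.ncard_eq_toFinset_card _ _
  have hIn : I.ncard = m := Set.ncard_eq_toFinset_card _ _
  have hsupp_card : c.supp.ncard = a + qs + m := by
    rw [Set.ncard_eq_toFinset_card _ (Set.toFinite _)]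
    show suppF.card = _
    rw [hsuppF, Finset.card_union_of_disjoint hdU, Finset.card_union_of_disjoint hdSQ]
  have h1' : qs + 2 * a = min (a + qs + m) (n - 1) := by
    rw [hSn, hQn, hsupp_card] at h1
    exact h1
  -- subset facts
  have hS_supp : ∀ v ∈ S, v ∈ c.supp := by
    intro v hv; rw [← hpart]; exact Or.inl (Or.inl hv)
  have hQ_supp : ∀ v ∈ Q, v ∈ c.supp := by
    intro v hv; rw [← hpart]; exact Or.inl (Or.inr hv)
  have hI_supp : ∀ v ∈ I, v ∈ c.supp := by
    intro v hv; rw [← hpart]; exact Or.inr hv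
  -- neighbors stay in the component
  have hN_supp : ∀ v, v ∈ c.supp → ∀ u ∈ Nf v, u ∈ suppF := by
    intro v hv u hu
    rw [memN] at hu
    rw [memsupp, SimpleGraph.ConnectedComponent.mem_supp_iff]
    rw [SimpleGraph.ConnectedComponent.mem_supp_iff] at hv
    rw [← SimpleGraph.ConnectedComponent.connectedComponentMk_eq_of_adj hu, hv]
  -- B1 : degree bound for S vertices
  have B1 : ∀ s ∈ Sf, (Nf s).card + 1 ≤ a + qs + m := by
    intro s hs
    have hssupp : s ∈ suppF := by rw [hsuppF]; exact Finset.mem_union_left _ (Finset.mem_union_left _ hs)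
    have hsub : Nf s ⊆ suppF.erase s := by
      intro u hu
      rw [Finset.mem_erase]
      refine ⟨?_, hN_supp s ((memsupp s).mp hssupp) u hu⟩
      rw [memN] at hu
      exact fun h => H.ne_of_adj hu (h ▸ rfl)
    have := Finset.card_le_card hsub
    rw [Finset.card_erase_of_mem hssupp] at this
    have h1le : 1 ≤ suppF.card := Finset.card_pos.mpr ⟨s, hssupp⟩
    have hsc : suppF.card = a + qs + m := by
      rw [hsuppF, Finset.card_union_of_disjoint hdU, Finset.card_union_of_disjoint hdSQ]
    omega
  -- B2 : degree bound for Q vertices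
  have B2 : ∀ q ∈ Qf, (Nf q).card ≤ n - 1 := by
    intro q hq
    have hqQ : q ∈ Q := (memQ q).mp hq
    have hqsupp : q ∈ c.supp := hQ_supp q hqQ
    have hsub : Nf q ⊆ ((Sf ∪ Qf).erase q) ∪ (If.filter (fun u => H.Adj q u)) := by
      intro u hu
      have hadj : H.Adj q u := (memN q u).mp hu
      have husupp : u ∈ suppF := hN_supp q hqsupp u hu
      rw [hsuppF, Finset.mem_union] at husupp
      rcases husupp with h | h
      · apply Finset.mem_union_left
        rw [Finset.mem_erase]
        exact ⟨fun he => H.ne_of_adj hadj (he ▸ rfl) , h⟩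
      · exact Finset.mem_union_right _ (Finset.mem_filter.mpr ⟨h, hadj⟩)
    have hcard := Finset.card_le_card hsub
    have hone : (If.filter (fun u => H.Adj q u)).card ≤ 1 := by
      apply Finset.card_le_one.mpr
      intro u hu v hv
      rw [Finset.mem_filter, memI] at hu hv
      exact h3 q hqQ u hu.1 v hv.1 hu.2 hv.2
    have hqmem : q ∈ Sf ∪ Qf := Finset.mem_union_right _ hq
    have h1le : 1 ≤ (Sf ∪ Qf).card := Finset.card_pos.mpr ⟨q, hqmem⟩
    have hUcard : (Sf ∪ Qf).card = a + qs := Finset.card_union_of_disjoint hdSQ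
    have hle2 := Finset.card_union_le ((Sf ∪ Qf).erase q) (If.filter (fun u => H.Adj q u))
    have herase : ((Sf ∪ Qf).erase q).card = (Sf ∪ Qf).card - 1 :=
      Finset.card_erase_of_mem hqmem
    have hmin := min_le_right (a + qs + m) (n - 1)
    omega
  -- B3 : degree structure for I vertices
  have B3 : ∀ u ∈ If, (Nf u).card ≤ a + (Qf.filter (fun q => H.Adj u q)).card := by
    intro u hu
    have huI : u ∈ I := (memI u).mp hu
    have hsub : Nf u ⊆ Sf ∪ (Qf.filter (fun q => H.Adj u q)) := by
      intro w hw
      have hadj : H.Adj u w := (memN u w).mp hw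
      have hwsupp : w ∈ suppF := hN_supp u (hI_supp u huI) w hw
      rw [hsuppF, Finset.mem_union, Finset.mem_union] at hwsupp
      rcases hwsupp with (h | h) | h
      · exact Finset.mem_union_left _ h
      · exact Finset.mem_union_right _ (Finset.mem_filter.mpr ⟨h, hadj⟩)
      · exact absurd hadj (h2 u huI w ((memI w).mp h))
    calc (Nf u).card ≤ (Sf ∪ (Qf.filter (fun q => H.Adj u q))).card := Finset.card_le_card hsub
      _ ≤ a + _ := Finset.card_union_le _ _
  -- the Q-I edge count
  set E := ∑ u ∈ If, (Qf.filter (fun q => H.Adj u q)).card with hEdef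
  have B4 : E ≤ qs := by
    have hswap : E = ∑ q ∈ Qf, (If.filter (fun u => H.Adj q u)).card := by
      rw [hEdef]
      simp only [Finset.card_filter]
      rw [Finset.sum_comm]
      congr 1
      ext q
      congr 1
      ext u
      congr 1
      · exact propext (H.adj_comm u q)
    rw [hswap]
    calc ∑ q ∈ Qf, (If.filter (fun u => H.Adj q u)).card ≤ ∑ q ∈ Qf, 1 := by
          apply Finset.sum_le_sum
          intro q hq
          apply Finset.card_le_one.mpr
          intro u hu v hv
          rw [Finset.mem_filter, memI] at hu hv
          exact h3 q ((memQ q).mp hq) u hu.1 v hv.1 hu.2 hv.2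
      _ = qs := by rw [Finset.sum_const, smul_eq_mul, mul_one]
  have B4' : E ≤ qs * m := by
    rw [hEdef]
    calc ∑ u ∈ If, (Qf.filter (fun q => H.Adj u q)).card ≤ ∑ u ∈ If, qs :=
          Finset.sum_le_sum (fun u _ => Finset.card_filter_le _ _)
      _ = m * qs := by rw [Finset.sum_const, smul_eq_mul]
      _ = qs * m := Nat.mul_comm _ _
  -- sum over S part
  have T1 : ∑ v ∈ Sf, (φ v + ((H.neighborSet v).ncard : ℝ)/2)
      ≤ (a : ℝ) * (((n:ℝ)-1)/4 + ((a:ℝ) + qs + m - 1)/2) := by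
    have := Finset.sum_le_card_nsmul Sf (fun v => φ v + ((H.neighborSet v).ncard : ℝ)/2)
      (((n:ℝ)-1)/4 + ((a:ℝ) + qs + m - 1)/2) ?_
    · rw [nsmul_eq_mul] at this
      exact this
    · intro s hs
      show φ s + ((H.neighborSet s).ncard : ℝ)/2 ≤ _
      have h1 := hφS s ((memS s).mp hs)
      have h2 := B1 s hs
      have : ((Nf s).card : ℝ) ≤ (a:ℝ) + qs + m - 1 := by
        have : ((Nf s).card : ℝ) + 1 ≤ (a:ℝ) + qs + m := by exact_mod_cast Nat.cast_le.mpr h2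
        linarith
      rw [hdval s]
      linarith
  -- sum over Q part
  have T2 : ∑ v ∈ Qf, (φ v + ((H.neighborSet v).ncard : ℝ)/2)
      ≤ (qs : ℝ) * (((n:ℝ)-1)/2) := by
    have := Finset.sum_le_card_nsmul Qf (fun v => φ v + ((H.neighborSet v).ncard : ℝ)/2)
      (((n:ℝ)-1)/2) ?_
    · rw [nsmul_eq_mul] at this
      exact this
    · intro q hq
      show φ q + ((H.neighborSet q).ncard : ℝ)/2 ≤ _
      have hd : ((H.neighborSet q).ncard : ℝ) ≤ (n:ℝ) - 1 := by
        rw [hdval q]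
        have := B2 q hq
        have hc : ((Nf q).card : ℝ) ≤ ((n - 1 : ℕ) : ℝ) := Nat.cast_le.mpr this
        have : ((n - 1 : ℕ) : ℝ) = (n:ℝ) - 1 := by
          rw [Nat.cast_sub hn0]
          norm_num
        linarith
      rcases hφQ q ((memQ q).mp hq) with h | h
      · rw [h]; linarith
      · rw [h]; linarith
  -- sum over I part
  have T3 : ∑ v ∈ If, (φ v + ((H.neighborSet v).ncard : ℝ)/2)
      ≤ ((a : ℝ) * m + (E:ℝ))/2 := by
    have hz : ∀ v ∈ If, φ v = 0 := fun v hv => hφI v ((memI v).mp hv)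
    have : ∑ v ∈ If, (φ v + ((H.neighborSet v).ncard : ℝ)/2)
        = ∑ v ∈ If, ((Nf v).card : ℝ)/2 := by
      apply Finset.sum_congr rfl
      intro v hv
      rw [hz v hv, hdval v, zero_add]
    rw [this]
    have hnat : ∑ v ∈ If, (Nf v).card ≤ a * m + E := by
      calc ∑ v ∈ If, (Nf v).card
          ≤ ∑ v ∈ If, (a + (Qf.filter (fun q => H.Adj v q)).card) :=
            Finset.sum_le_sum (fun v hv => B3 v hv)
        _ = m * a + E := by rw [Finset.sum_add_distrib, Finset.sum_const, smul_eq_mul, hEdef]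
        _ = a * m + E := by ring_nf
    have hcast : ((∑ v ∈ If, (Nf v).card : ℕ) : ℝ) ≤ (a:ℝ) * m + E := by
      calc ((∑ v ∈ If, (Nf v).card : ℕ) : ℝ) ≤ ((a * m + E : ℕ) : ℝ) := Nat.cast_le.mpr hnat
        _ = (a:ℝ) * m + E := by push_cast; ring
    calc ∑ v ∈ If, ((Nf v).card : ℝ)/2 = ((∑ v ∈ If, (Nf v).card : ℕ) : ℝ)/2 := by
          rw [Nat.cast_sum]
          rw [Finset.sum_div]
      _ ≤ ((a : ℝ) * m + E)/2 := by linarith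
  -- structural claim
  have claim1 : 1 ≤ a → (qs + 2 * a = n - 1 ∧ a + 1 ≤ m) := by
    intro ha
    have hm1 : 1 ≤ m := by
      by_contra hm
      have : m = 0 := by omega
      rw [this] at h1'
      omega
    have hInem : I ≠ ∅ := by
      intro hI
      rw [hI] at hIn
      simp [Set.ncard_empty] at hIn
      omega
    have hbig : ¬ (c.supp.ncard ≤ n - 1) := fun h => hInem (h2' h)
    rw [hsupp_card] at hbig
    omega
  -- final arithmetic
  rw [hsuppF, Finset.sum_union hdU, Finset.sum_union hdSQ, hsupp_card]
  have hcast : ((a + qs + m : ℕ) : ℝ) = (a:ℝ) + qs + m := by push_cast; ring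
  rw [hcast]
  have hQsN : (qs : ℝ) ≤ (n:ℝ) - 1 := by
    have : qs ≤ n - 1 := by omega
    have := (Nat.cast_le (α := ℝ)).mpr this
    rw [Nat.cast_sub hn0] at this
    simpa using this
  have hE1 : (E : ℝ) ≤ (qs : ℝ) := Nat.cast_le.mpr B4
  have hE2 : (E : ℝ) ≤ (qs : ℝ) * m := by
    have := (Nat.cast_le (α := ℝ)).mpr B4'
    push_cast at this
    linarith
  have hM0 : (0:ℝ) ≤ m := Nat.cast_nonneg m
  have hA0 : (0:ℝ) ≤ a := Nat.cast_nonneg a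
  have hQs0 : (0:ℝ) ≤ qs := Nat.cast_nonneg qs
  rcases Nat.eq_zero_or_pos a with ha0 | ha1
  · have hA : (a : ℝ) = 0 := by rw [ha0]; norm_num
    nlinarith [T1, T2, T3, mul_nonneg (sub_nonneg.mpr hQsN) hM0]
  · obtain ⟨he1, he2⟩ := claim1 ha1
    have hNe : (n:ℝ) - 1 = (qs:ℝ) + 2 * a := by
      have : ((qs + 2*a : ℕ) : ℝ) = ((n - 1 : ℕ) : ℝ) := by rw [he1]
      rw [Nat.cast_sub hn0] at this
      push_cast at this
      linarith
    have hMge : (a:ℝ) + 1 ≤ (m:ℝ) := by exact_mod_cast he2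
    nlinarith [T1, T2, T3, mul_nonneg hA0 hQs0, mul_nonneg (sub_nonneg.mpr hMge) hQs0,
      mul_nonneg hA0 (sub_nonneg.mpr hMge)]

open scoped Classical in
theorem stmt10 (n : ℕ) (hn : Even n) (hn0 : 0 < n) (k : ℕ) (hk : 0 < k)
    (V : Type*) [Fintype V] (G : SimpleGraph V) (col : Sym2 V → Fin k)
    (hnm : ∀ i : Fin k, ¬ HasConnectedMatching (colorClass G col i) (n / 2))
    (S Q I : (i : Fin k) → (colorClass G col i).ConnectedComponent → Set V)
    (hpart : ∀ (i : Fin k) (c : (colorClass G col i).ConnectedComponent),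
      S i c ∪ Q i c ∪ I i c = c.supp)
    (hdisj : ∀ (i : Fin k) (c : (colorClass G col i).ConnectedComponent),
      Disjoint (S i c) (Q i c) ∧ Disjoint (S i c) (I i c) ∧ Disjoint (Q i c) (I i c))
    (h1 : ∀ (i : Fin k) (c : (colorClass G col i).ConnectedComponent),
      (Q i c).ncard + 2 * (S i c).ncard = min c.supp.ncard (n - 1))
    (h2 : ∀ (i : Fin k) (c : (colorClass G col i).ConnectedComponent),
      ∀ u ∈ I i c, ∀ v ∈ I i c, ¬ (colorClass G col i).Adj u v)
    (h2' : ∀ (i : Fin k) (c : (colorClass G col i).ConnectedComponent),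
      c.supp.ncard ≤ n - 1 → I i c = ∅)
    (h3 : ∀ (i : Fin k) (c : (colorClass G col i).ConnectedComponent),
      ∀ q ∈ Q i c, ∀ v₁ ∈ I i c, ∀ v₂ ∈ I i c,
        (colorClass G col i).Adj q v₁ → (colorClass G col i).Adj q v₂ → v₁ = v₂)
    (h4 : ∀ (i : Fin k) (c : (colorClass G col i).ConnectedComponent),
      ∀ v ∈ I i c, ((colorClass G col i).neighborSet v).ncard < n / 2) :
    ∑ v : V,
      (if ∃ i : Fin k, v ∈ S i ((colorClass G col i).connectedComponentMk v) then
        ((n : ℝ) - 1) / 4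
      else if ∀ i : Fin k, v ∈ Q i ((colorClass G col i).connectedComponentMk v) then
        (k : ℝ) * (((n : ℝ) - 1) / 2) - ((G.neighborSet v).ncard : ℝ) / 2
      else 0)
    ≤ (k : ℝ) * (((n : ℝ) - 1) / 2) * (Fintype.card V : ℝ) - (G.edgeSet.ncard : ℝ) := by
  classical
  set d : Fin k → V → ℝ := fun i v => (((colorClass G col i).neighborSet v).ncard : ℝ) with hddef
  -- splitting the degree of a vertex by colors
  have hsplit : ∀ v : V, ((G.neighborSet v).ncard : ℝ) = ∑ i : Fin k, d i v := by
    intro v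
    have hN : (G.neighborSet v).ncard
        = ∑ i : Fin k, ((colorClass G col i).neighborSet v).ncard := by
      set N := (Set.toFinite (G.neighborSet v)).toFinset with hNdef
      have hfib : N.card = ∑ i : Fin k, (N.filter (fun u => col s(v,u) = i)).card :=
        Finset.card_eq_sum_card_fiberwise (fun u _ => Finset.mem_univ _)
      rw [Set.ncard_eq_toFinset_card _ (Set.toFinite _)]
      rw [show (Set.toFinite (G.neighborSet v)).toFinset = N from rfl, hfib]
      apply Finset.sum_congr rfl
      intro i _
      rw [Set.ncard_eq_toFinset_card _ (Set.toFinite _)]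
      congr 1
      ext u
      simp only [Finset.mem_filter, Set.Finite.mem_toFinset, SimpleGraph.mem_neighborSet, hNdef]
      show G.Adj v u ∧ col s(v,u) = i ↔ (colorClass G col i).Adj v u
      exact Iff.rfl
    rw [hN, Nat.cast_sum]
  -- handshake
  have handshake : ∑ v : V, ((G.neighborSet v).ncard : ℝ) = 2 * (G.edgeSet.ncard : ℝ) := by
    have hdeg : ∀ v : V, (G.neighborSet v).ncard = G.degree v := by
      intro v
      rw [Set.ncard_eq_toFinset_card', Set.toFinset_card]
      exact SimpleGraph.card_neighborSet_eq_degree G v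
    have hhs := SimpleGraph.sum_degrees_eq_twice_card_edges G
    have hedge : G.edgeSet.ncard = G.edgeFinset.card := Set.ncard_eq_toFinset_card' _
    calc ∑ v : V, ((G.neighborSet v).ncard : ℝ) = ∑ v : V, ((G.degree v : ℕ) : ℝ) := by
          exact Finset.sum_congr rfl (fun v _ => by rw [hdeg v])
      _ = ((∑ v : V, G.degree v : ℕ) : ℝ) := by rw [Nat.cast_sum]
      _ = ((2 * G.edgeFinset.card : ℕ) : ℝ) := by rw [hhs]
      _ = 2 * (G.edgeSet.ncard : ℝ) := by rw [hedge]; push_cast; ring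
  -- the charge function
  set φ : Fin k → V → ℝ := fun i v =>
    if hs : ∃ j : Fin k, v ∈ S j ((colorClass G col j).connectedComponentMk v) then
      (if i = hs.choose then ((n:ℝ) - 1)/4 else 0)
    else if ∀ j : Fin k, v ∈ Q j ((colorClass G col j).connectedComponentMk v) then
      ((n:ℝ) - 1)/2 - d i v / 2
    else 0 with hφdef
  -- pointwise: F v = ∑ i, φ i v
  have hF : ∀ v : V,
      (if ∃ i : Fin k, v ∈ S i ((colorClass G col i).connectedComponentMk v) then
        ((n : ℝ) - 1) / 4
      else if ∀ i : Fin k, v ∈ Q i ((colorClass G col i).connectedComponentMk v) then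
        (k : ℝ) * (((n : ℝ) - 1) / 2) - ((G.neighborSet v).ncard : ℝ) / 2
      else 0) = ∑ i : Fin k, φ i v := by
    intro v
    by_cases hs : ∃ j : Fin k, v ∈ S j ((colorClass G col j).connectedComponentMk v)
    · rw [if_pos hs]
      have heach : ∀ i : Fin k, φ i v = if i = hs.choose then ((n:ℝ) - 1)/4 else 0 := by
        intro i
        simp only [hφdef]
        rw [dif_pos hs]
      rw [Finset.sum_congr rfl (fun i _ => heach i),
        Finset.sum_ite_eq' Finset.univ hs.choose (fun _ => ((n:ℝ) - 1)/4),
        if_pos (Finset.mem_univ _)]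
    · rw [if_neg hs]
      by_cases hq : ∀ j : Fin k, v ∈ Q j ((colorClass G col j).connectedComponentMk v)
      · rw [if_pos hq]
        have heach : ∀ i : Fin k, φ i v = ((n:ℝ) - 1)/2 - d i v / 2 := by
          intro i
          simp only [hφdef]
          rw [dif_neg hs, if_pos hq]
        rw [Finset.sum_congr rfl (fun i _ => heach i), Finset.sum_sub_distrib,
          Finset.sum_const, Finset.card_univ, Fintype.card_fin, ← Finset.sum_div,
          ← hsplit v, nsmul_eq_mul]
      · rw [if_neg hq]
        symm
        apply Finset.sum_eq_zero
        intro i _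
        simp only [hφdef]
        rw [dif_neg hs, if_neg hq]
  -- the per-color bound
  have key : ∀ i : Fin k,
      (∑ v : V, (φ i v + d i v / 2)) ≤ ((n:ℝ) - 1)/2 * (Fintype.card V : ℝ) := by
    intro i
    have hmaps : ∀ v ∈ (Finset.univ : Finset V),
        (colorClass G col i).connectedComponentMk v ∈
          Finset.univ.image (fun v => (colorClass G col i).connectedComponentMk v) :=
      fun v _ => Finset.mem_image_of_mem _ (Finset.mem_univ v)
    have hfib := Finset.sum_fiberwise_of_maps_to hmaps (fun v => φ i v + d i v / 2)
    rw [← hfib]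
    have hfibeq : ∀ c : (colorClass G col i).ConnectedComponent,
        Finset.univ.filter (fun v => (colorClass G col i).connectedComponentMk v = c)
          = (Set.toFinite c.supp).toFinset := by
      intro c
      ext v
      simp only [Finset.mem_filter, Finset.mem_univ, true_and, Set.Finite.mem_toFinset,
        SimpleGraph.ConnectedComponent.mem_supp_iff]
    have hcards : ∑ c ∈ Finset.univ.image (fun v => (colorClass G col i).connectedComponentMk v),
        (c.supp.ncard : ℝ) = (Fintype.card V : ℝ) := by
      have hc1 : ∀ c ∈ Finset.univ.image (fun v => (colorClass G col i).connectedComponentMk v),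
          (c.supp.ncard : ℝ) = ((Finset.univ.filter
            (fun v => (colorClass G col i).connectedComponentMk v = c)).card : ℝ) := by
        intro c _
        rw [Set.ncard_eq_toFinset_card _ (Set.toFinite _), hfibeq c]
      rw [Finset.sum_congr rfl hc1, ← Nat.cast_sum,
        ← Finset.card_eq_sum_card_fiberwise hmaps, Finset.card_univ]
    calc ∑ c ∈ Finset.univ.image (fun v => (colorClass G col i).connectedComponentMk v),
          ∑ v ∈ Finset.univ.filter
            (fun v => (colorClass G col i).connectedComponentMk v = c), (φ i v + d i v / 2)
        ≤ ∑ c ∈ Finset.univ.image (fun v => (colorClass G col i).connectedComponentMk v),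
            ((n:ℝ) - 1)/2 * (c.supp.ncard : ℝ) := by
          apply Finset.sum_le_sum
          intro c _
          rw [hfibeq c]
          have hφS : ∀ s ∈ S i c, φ i s ≤ ((n:ℝ) - 1)/4 := by
            intro s hsS
            have hmk : (colorClass G col i).connectedComponentMk s = c := by
              rw [← SimpleGraph.ConnectedComponent.mem_supp_iff, ← hpart i c]
              exact Or.inl (Or.inl hsS)
            have hstrong : ∃ j : Fin k, s ∈ S j ((colorClass G col j).connectedComponentMk s) :=
              ⟨i, by rw [hmk]; exact hsS⟩
            have hn1 : (0:ℝ) ≤ ((n:ℝ) - 1)/4 := by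
              have : (1:ℝ) ≤ (n:ℝ) := by exact_mod_cast hn0
              linarith
            simp only [hφdef]
            rw [dif_pos hstrong]
            split_ifs
            · exact le_refl _
            · exact hn1
          have hφQ : ∀ q ∈ Q i c, φ i q = 0 ∨
              φ i q = ((n:ℝ) - 1)/2 - (((colorClass G col i).neighborSet q).ncard : ℝ)/2 := by
            intro q hqQ
            have hmk : (colorClass G col i).connectedComponentMk q = c := by
              rw [← SimpleGraph.ConnectedComponent.mem_supp_iff, ← hpart i c]
              exact Or.inl (Or.inr hqQ)
            by_cases hstrong : ∃ j : Fin k, q ∈ S j ((colorClass G col j).connectedComponentMk q)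
            · by_cases hi : i = hstrong.choose
              · exfalso
                have hspec := hstrong.choose_spec
                rw [← hi, hmk] at hspec
                exact Set.disjoint_left.mp (hdisj i c).1 hspec hqQ
              · left
                simp only [hφdef]
                rw [dif_pos hstrong, if_neg hi]
            · by_cases hq' : ∀ j : Fin k, q ∈ Q j ((colorClass G col j).connectedComponentMk q)
              · right
                simp only [hφdef]
                rw [dif_neg hstrong, if_pos hq']
              · left
                simp only [hφdef]
                rw [dif_neg hstrong, if_neg hq']
          have hφI : ∀ u ∈ I i c, φ i u = 0 := by
            intro u huI
            have hmk : (colorClass G col i).connectedComponentMk u = c := by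
              rw [← SimpleGraph.ConnectedComponent.mem_supp_iff, ← hpart i c]
              exact Or.inr huI
            by_cases hstrong : ∃ j : Fin k, u ∈ S j ((colorClass G col j).connectedComponentMk u)
            · by_cases hi : i = hstrong.choose
              · exfalso
                have hspec := hstrong.choose_spec
                rw [← hi, hmk] at hspec
                exact Set.disjoint_left.mp (hdisj i c).2.1 hspec huI
              · simp only [hφdef]
                rw [dif_pos hstrong, if_neg hi]
            · by_cases hq' : ∀ j : Fin k, u ∈ Q j ((colorClass G col j).connectedComponentMk u)
              · exfalso
                have := hq' i
                rw [hmk] at this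
                exact Set.disjoint_left.mp (hdisj i c).2.2 this huI
              · simp only [hφdef]
                rw [dif_neg hstrong, if_neg hq']
          exact core_comp (colorClass G col i) n hn0 c (S i c) (Q i c) (I i c)
            (hpart i c) (hdisj i c).1 (hdisj i c).2.1 (hdisj i c).2.2
            (h1 i c) (h2 i c) (h2' i c) (h3 i c) (φ i) hφS hφQ hφI
      _ = ((n:ℝ) - 1)/2 * (Fintype.card V : ℝ) := by rw [← Finset.mul_sum, hcards]
  -- assembly
  have e1 : (∑ v : V,
      (if ∃ i : Fin k, v ∈ S i ((colorClass G col i).connectedComponentMk v) then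
        ((n : ℝ) - 1) / 4
      else if ∀ i : Fin k, v ∈ Q i ((colorClass G col i).connectedComponentMk v) then
        (k : ℝ) * (((n : ℝ) - 1) / 2) - ((G.neighborSet v).ncard : ℝ) / 2
      else 0)) + (G.edgeSet.ncard : ℝ) = ∑ i : Fin k, ∑ v : V, (φ i v + d i v / 2) := by
    rw [Finset.sum_comm]
    have hvv : ∀ v : V, ∑ i : Fin k, (φ i v + d i v / 2)
        = (if ∃ i : Fin k, v ∈ S i ((colorClass G col i).connectedComponentMk v) then
            ((n : ℝ) - 1) / 4
          else if ∀ i : Fin k, v ∈ Q i ((colorClass G col i).connectedComponentMk v) then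
            (k : ℝ) * (((n : ℝ) - 1) / 2) - ((G.neighborSet v).ncard : ℝ) / 2
          else 0) + ((G.neighborSet v).ncard : ℝ)/2 := by
      intro v
      rw [Finset.sum_add_distrib, ← Finset.sum_div, ← hsplit v, ← hF v]
    rw [Finset.sum_congr rfl (fun v _ => hvv v), Finset.sum_add_distrib, ← Finset.sum_div,
      handshake]
    ring
  have e2 : ∑ i : Fin k, ∑ v : V, (φ i v + d i v / 2)
      ≤ (k : ℝ) * (((n : ℝ) - 1) / 2) * (Fintype.card V : ℝ) := by
    calc ∑ i : Fin k, ∑ v : V, (φ i v + d i v / 2)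
        ≤ ∑ _i : Fin k, ((n:ℝ) - 1)/2 * (Fintype.card V : ℝ) :=
          Finset.sum_le_sum (fun i _ => key i)
      _ = (k : ℝ) * (((n : ℝ) - 1) / 2) * (Fintype.card V : ℝ) := by
          rw [Finset.sum_const, Finset.card_univ, Fintype.card_fin, nsmul_eq_mul]
          ring
  linarith [e1 ▸ e2]
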